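/- For every n with 4 ≤ n ≤ 10, ext(n,{K_{1,3}+e, C_4}) = ext(n,{C_3, C_4}), i.e., the maximum number of edges of an n-vertex graph containing neither a copy of K_{1,3}+e nor a 4-cycle equals the maximum number of edges of an n-vertex graph containing neither a triangle nor a 4-cycle. -/

import Mathlib

open SimpleGraph

/-- `G` contains a (not necessarily induced) subgraph copy of `H`. -/
def ContainsCopy {V W : Type*} (G : SimpleGraph V) (H : SimpleGraph W) : Prop :=
  ∃ f : W → V, Function.Injective f ∧ ∀ u v, H.Adj u v → G.Adj (f u) (f v)

/-- The Turán number `ext(n, {H₁, H₂})`: the maximum number of edges of a graph on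
`n` vertices containing no copy of `H₁` and no copy of `H₂`. -/
noncomputable def extNum2 (n : ℕ) {V₁ V₂ : Type*}
    (H₁ : SimpleGraph V₁) (H₂ : SimpleGraph V₂) : ℕ :=
  sSup {m | ∃ G : SimpleGraph (Fin n),
    G.edgeSet.ncard = m ∧ ¬ ContainsCopy G H₁ ∧ ¬ ContainsCopy G H₂}

/-- `K_{1,3} + e`: a triangle with a pendant edge. -/
def K13e : SimpleGraph (Fin 4) :=
  SimpleGraph.fromEdgeSet {s(0, 1), s(0, 2), s(1, 2), s(0, 3)}


set_option linter.unusedTactic false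
set_option linter.unreachableTactic false
lemma containsC3_iff {n : ℕ} (G : SimpleGraph (Fin n)) :
    ContainsCopy G (SimpleGraph.cycleGraph 3) ↔
      ∃ a b c, G.Adj a b ∧ G.Adj b c ∧ G.Adj a c := by
  constructor
  · rintro ⟨f, hf, hadj⟩
    exact ⟨f 0, f 1, f 2, hadj 0 1 (by decide), hadj 1 2 (by decide), hadj 0 2 (by decide)⟩
  · rintro ⟨a, b, c, h1, h2, h3⟩
    have nab := h1.ne; have nbc := h2.ne; have nac := h3.ne
    refine ⟨![a,b,c], ?_, ?_⟩
    · intro u v huv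
      fin_cases u <;> fin_cases v <;> simp_all
    · intro u v huv
      have h1' := h1.symm; have h2' := h2.symm; have h3' := h3.symm
      fin_cases u <;> fin_cases v <;> simp_all <;> first | exact h1 | exact h2 | exact h3 | exact h1' | exact h2' | exact h3' | exact (huv.ne rfl).elim

lemma containsC4_iff {n : ℕ} (G : SimpleGraph (Fin n)) :
    ContainsCopy G (SimpleGraph.cycleGraph 4) ↔
      ∃ a b c d, a ≠ c ∧ b ≠ d ∧ G.Adj a b ∧ G.Adj b c ∧ G.Adj c d ∧ G.Adj d a := by
  constructor
  · rintro ⟨f, hf, hadj⟩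
    exact ⟨f 0, f 1, f 2, f 3, fun h => (by decide : (0:Fin 4) ≠ 2) (hf h),
      fun h => (by decide : (1:Fin 4) ≠ 3) (hf h),
      hadj 0 1 (by decide), hadj 1 2 (by decide), hadj 2 3 (by decide), hadj 3 0 (by decide)⟩
  · rintro ⟨a, b, c, d, hac, hbd, h1, h2, h3, h4⟩
    have nab := h1.ne; have nbc := h2.ne; have ncd := h3.ne; have nda := h4.ne
    have h1' := h1.symm; have h2' := h2.symm; have h3' := h3.symm; have h4' := h4.symm
    refine ⟨![a,b,c,d], ?_, ?_⟩
    · intro u v huv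
      fin_cases u <;> fin_cases v <;> simp_all <;> tauto
    · intro u v huv
      fin_cases u <;> fin_cases v <;> simp_all (config := {decide := true}) <;>
        first | exact h1 | exact h2 | exact h3 | exact h4 | exact h1' | exact h2' | exact h3' | exact h4'

lemma containsK13e_iff {n : ℕ} (G : SimpleGraph (Fin n)) :
    ContainsCopy G K13e ↔
      ∃ a b c d, G.Adj a b ∧ G.Adj a c ∧ G.Adj b c ∧ G.Adj a d ∧ d ≠ b ∧ d ≠ c := by
  constructor
  · rintro ⟨f, hf, hadj⟩
    exact ⟨f 0, f 1, f 2, f 3, hadj 0 1 (by simp [K13e]), hadj 0 2 (by simp [K13e]),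
      hadj 1 2 (by simp [K13e]), hadj 0 3 (by simp [K13e]),
      fun h => (by decide : (3:Fin 4) ≠ 1) (hf h), fun h => (by decide : (3:Fin 4) ≠ 2) (hf h)⟩
  · rintro ⟨a, b, c, d, h1, h2, h3, h4, hdb, hdc⟩
    have nab := h1.ne; have nac := h2.ne; have nbc := h3.ne; have nad := h4.ne
    have h1' := h1.symm; have h2' := h2.symm; have h3' := h3.symm; have h4' := h4.symm
    refine ⟨![a,b,c,d], ?_, ?_⟩
    · intro u v huv
      fin_cases u <;> fin_cases v <;> simp_all <;> tauto
    · intro u v huv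
      fin_cases u <;> fin_cases v <;> simp_all (config := {decide := true}) [K13e] <;>
        first | exact h1 | exact h2 | exact h3 | exact h4 | exact h1' | exact h2' | exact h3' | exact h4'

lemma wrapW {m : ℕ} [NeZero m] (hm : 6 ≤ m) (i : Fin m) :
    ((i+1).val = i.val + 1 ∧ i.val + 1 < m) ∨ ((i+1).val = 0 ∧ i.val + 1 = m) := by
  have h1 : (1 : Fin m).val = 1 := by
    rw [Fin.val_one']; exact Nat.mod_eq_of_lt (by omega)
  have h : (i + 1).val = (i.val + 1) % m := by
    rw [Fin.add_def, h1]
  rcases Nat.lt_or_ge (i.val + 1) m with h2 | h2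
  · left; rw [h, Nat.mod_eq_of_lt h2]; exact ⟨rfl, h2⟩
  · right
    have : i.val + 1 = m := by have := i.isLt; omega
    exact ⟨by rw [h, this, Nat.mod_self], this⟩

-- R i j := j = i + 1 ∨ i = j + 1
lemma tri_false {m : ℕ} [NeZero m] (hm : 6 ≤ m) (p q r : Fin m)
    (h1 : q = p + 1 ∨ p = q + 1) (h2 : r = q + 1 ∨ q = r + 1)
    (h3 : r = p + 1 ∨ p = r + 1) : False := by
  have wp := wrapW hm p; have wq := wrapW hm q; have wr := wrapW hm r
  have hp := p.isLt; have hq := q.isLt; have hr := r.isLt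
  have v1 : q.val = (p+1).val ∨ p.val = (q+1).val := by
    rcases h1 with h | h <;> [left; right] <;> rw [h]
  have v2 : r.val = (q+1).val ∨ q.val = (r+1).val := by
    rcases h2 with h | h <;> [left; right] <;> rw [h]
  have v3 : r.val = (p+1).val ∨ p.val = (r+1).val := by
    rcases h3 with h | h <;> [left; right] <;> rw [h]
  omega

lemma quad_false {m : ℕ} [NeZero m] (hm : 6 ≤ m) (p q r s : Fin m)
    (hpr : p ≠ r) (hqs : q ≠ s)
    (h1 : q = p + 1 ∨ p = q + 1) (h2 : r = q + 1 ∨ q = r + 1)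
    (h3 : s = r + 1 ∨ r = s + 1) (h4 : p = s + 1 ∨ s = p + 1) : False := by
  have wp := wrapW hm p; have wq := wrapW hm q; have wr := wrapW hm r; have ws := wrapW hm s
  have hp := p.isLt; have hq := q.isLt; have hr := r.isLt; have hs := s.isLt
  have hpr' : p.val ≠ r.val := fun h => hpr (Fin.ext h)
  have hqs' : q.val ≠ s.val := fun h => hqs (Fin.ext h)
  have v1 : q.val = (p+1).val ∨ p.val = (q+1).val := by
    rcases h1 with h | h <;> [left; right] <;> rw [h]
  have v2 : r.val = (q+1).val ∨ q.val = (r+1).val := by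
    rcases h2 with h | h <;> [left; right] <;> rw [h]
  have v3 : s.val = (r+1).val ∨ r.val = (s+1).val := by
    rcases h3 with h | h <;> [left; right] <;> rw [h]
  have v4 : p.val = (s+1).val ∨ s.val = (p+1).val := by
    rcases h4 with h | h <;> [left; right] <;> rw [h]
  omega

lemma succ_ne {m : ℕ} [NeZero m] (hm : 6 ≤ m) (i : Fin m) : i ≠ i + 1 := by
  have w := wrapW hm i
  have hi := i.isLt
  intro h
  have : i.val = (i+1).val := by rw [← h]
  omega

lemma succ_inj {m : ℕ} [NeZero m] (hm : 6 ≤ m) (i j : Fin m) (h : i = j + 1) (h' : j = i + 1) : False := by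
  have wi := wrapW hm i; have wj := wrapW hm j
  have hi := i.isLt; have hj := j.isLt
  have : i.val = (j+1).val := by rw [h]
  have : j.val = (i+1).val := by rw [h']
  omega

section Tri
variable {n : ℕ} {G : SimpleGraph (Fin n)}

def inTri (G : SimpleGraph (Fin n)) (v : Fin n) : Prop :=
  ∃ a b, G.Adj v a ∧ G.Adj v b ∧ G.Adj a b

noncomputable def triFinset (G : SimpleGraph (Fin n)) : Finset (Fin n) :=
  Set.Finite.toFinset (Set.toFinite {v | inTri G v})

lemma mem_triFinset {v : Fin n} : v ∈ triFinset G ↔ inTri G v := by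
  simp [triFinset]

def NoPendant (G : SimpleGraph (Fin n)) : Prop :=
  ∀ a b c d, G.Adj a b → G.Adj a c → G.Adj b c → G.Adj a d → d = b ∨ d = c

lemma tri_mates (hK : NoPendant G) {v a b : Fin n}
    (hva : G.Adj v a) (hvb : G.Adj v b) (hab : G.Adj a b) :
    (a ∈ triFinset G ∧ b ∈ triFinset G) ∧
      (∀ z, G.Adj v z → z = a ∨ z = b) ∧
      (∀ z, G.Adj a z → z = v ∨ z = b) ∧
      (∀ z, G.Adj b z → z = v ∨ z = a) := by
  refine ⟨⟨mem_triFinset.mpr ⟨v, b, hva.symm, hab, hvb⟩,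
    mem_triFinset.mpr ⟨v, a, hvb.symm, hab.symm, hva⟩⟩,
    fun z hz => hK v a b z hva hvb hab hz,
    fun z hz => hK a v b z hva.symm hab hvb hz,
    fun z hz => hK b v a z hvb.symm hab.symm hva hz⟩

lemma tri_closed (hK : NoPendant G) {x y : Fin n}
    (hx : x ∈ triFinset G) (hxy : G.Adj x y) : y ∈ triFinset G := by
  obtain ⟨a, b, hva, hvb, hab⟩ := mem_triFinset.mp hx
  obtain ⟨⟨ha, hb⟩, hnv, _, _⟩ := tri_mates hK hva hvb hab
  rcases hnv y hxy with rfl | rfl <;> assumption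

/-- edges inside the triangle part -/
def Aset (G : SimpleGraph (Fin n)) : Set (Sym2 (Fin n)) :=
  {e | e ∈ G.edgeSet ∧ ∀ v ∈ e, v ∈ triFinset G}

/-- edges outside the triangle part -/
def Bset (G : SimpleGraph (Fin n)) : Set (Sym2 (Fin n)) :=
  {e | e ∈ G.edgeSet ∧ ∀ v ∈ e, v ∉ triFinset G}

lemma mem_Bset {x y : Fin n} :
    s(x, y) ∈ Bset G ↔ G.Adj x y ∧ x ∉ triFinset G ∧ y ∉ triFinset G := by
  simp only [Bset, Set.mem_setOf_eq, mem_edgeSet, Sym2.mem_iff, forall_eq_or_imp, forall_eq]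

lemma edge_split (hK : NoPendant G) : G.edgeSet = Aset G ∪ Bset G := by
  apply Set.Subset.antisymm
  · intro e he
    induction e with
    | h x y =>
      by_cases hx : x ∈ triFinset G
      · left
        refine ⟨he, ?_⟩
        intro v hv
        rw [Sym2.mem_iff] at hv
        rcases hv with rfl | rfl
        · exact hx
        · exact tri_closed hK hx (G.mem_edgeSet.mp he)
      · right
        refine ⟨he, ?_⟩
        intro v hv
        rw [Sym2.mem_iff] at hv
        rcases hv with rfl | rfl
        · exact hx
        · intro hy; exact hx (tri_closed hK hy (G.mem_edgeSet.mp he).symm)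
  · rintro e (he | he) <;> exact he.1

lemma AB_disjoint : Disjoint (Aset G) (Bset G) := by
  rw [Set.disjoint_left]
  rintro e ⟨he, hA⟩ ⟨_, hB⟩
  induction e with
  | h x y => exact hB x (Sym2.mem_mk_left x y) (hA x (Sym2.mem_mk_left x y))

lemma sym2_eq_of_mem {x y p q : Fin n} (hxy : x ≠ y)
    (hx : x = p ∨ x = q) (hy : y = p ∨ y = q) : s(x, y) = s(p, q) := by
  rcases hx with rfl | rfl <;> rcases hy with rfl | rfl
  · exact absurd rfl hxy
  · rfl
  · exact Sym2.eq_swap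
  · exact absurd rfl hxy

lemma Acard (hK : NoPendant G) : (Aset G).ncard ≤ (triFinset G).card := by
  have hex : ∀ e ∈ Aset G, ∃ z, z ∈ triFinset G ∧ ∀ u ∈ e, G.Adj z u := by
    rintro e ⟨he, hall⟩
    induction e with
    | h x y =>
      have hadj : G.Adj x y := G.mem_edgeSet.mp he
      have hx : x ∈ triFinset G := hall x (Sym2.mem_mk_left x y)
      obtain ⟨a, b, hxa, hxb, hab⟩ := mem_triFinset.mp hx
      obtain ⟨⟨haT, hbT⟩, hnx, hna, hnb⟩ := tri_mates hK hxa hxb hab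
      rcases hnx y hadj with rfl | rfl
      · refine ⟨b, hbT, ?_⟩
        intro u hu; rw [Sym2.mem_iff] at hu
        rcases hu with rfl | rfl
        · exact hxb.symm
        · exact hab.symm
      · refine ⟨a, haT, ?_⟩
        intro u hu; rw [Sym2.mem_iff] at hu
        rcases hu with rfl | rfl
        · exact hxa.symm
        · exact hab
  choose φ hφT hφadj using hex
  rcases Set.eq_empty_or_nonempty (Aset G) with hA | ⟨e0, he0⟩
  · simp [hA]
  haveI : Nonempty (Fin n) := ⟨φ e0 he0⟩
  classical
  set g : Sym2 (Fin n) → Fin n := fun e => if h : e ∈ Aset G then φ e h else Classical.arbitrary _ with hg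
  have : (Aset G).ncard ≤ ((triFinset G : Finset (Fin n)) : Set (Fin n)).ncard := by
    apply Set.ncard_le_ncard_of_injOn g
    · intro e he; simp only [hg, dif_pos he]; exact hφT e he
    · intro e1 h1 e2 h2 heq
      simp only [hg, dif_pos h1, dif_pos h2] at heq
      -- both map to z with all members adjacent to z
      set z := φ e1 h1 with hz
      have hzT : z ∈ triFinset G := hφT e1 h1
      obtain ⟨p, q, hzp, hzq, hpq⟩ := mem_triFinset.mp hzT
      obtain ⟨_, hnz, _, _⟩ := tri_mates hK hzp hzq hpq
      have key : ∀ (e : Sym2 (Fin n)) (he : e ∈ Aset G), φ e he = z → e = s(p, q) := by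
        intro e
        induction e with
        | h x y =>
          intro he hze
          have hxy : x ≠ y := (G.mem_edgeSet.mp he.1).ne
          have hx := hφadj s(x, y) he x (Sym2.mem_mk_left x y)
          have hy := hφadj s(x, y) he y (Sym2.mem_mk_right x y)
          rw [hze] at hx hy
          exact sym2_eq_of_mem hxy (hnz x hx) (hnz y hy)
      rw [key e1 h1 rfl, key e2 h2 heq.symm]
  simpa using this


lemma card_tri_of_nonempty (hK : NoPendant G) (h : (triFinset G).Nonempty) :
    3 ≤ (triFinset G).card := by
  obtain ⟨v, hv⟩ := h
  obtain ⟨a, b, hva, hvb, hab⟩ := mem_triFinset.mp hv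
  obtain ⟨⟨ha, hb⟩, _, _, _⟩ := tri_mates hK hva hvb hab
  have hsub : ({v, a, b} : Finset (Fin n)) ⊆ triFinset G := by
    intro x hx; simp only [Finset.mem_insert, Finset.mem_singleton] at hx
    rcases hx with rfl | rfl | rfl <;> assumption
  have hc : ({v, a, b} : Finset (Fin n)).card = 3 := by
    rw [Finset.card_insert_of_notMem (by simp [hva.ne, hvb.ne]),
      Finset.card_insert_of_notMem (by simp [hab.ne]), Finset.card_singleton]
  calc 3 = ({v, a, b} : Finset (Fin n)).card := hc.symm
    _ ≤ _ := Finset.card_le_card hsub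

lemma card_tri_ge_six (hK : NoPendant G) (h : 4 ≤ (triFinset G).card) :
    6 ≤ (triFinset G).card := by
  have hne : (triFinset G).Nonempty := Finset.card_pos.mp (by omega)
  obtain ⟨v, hv⟩ := hne
  obtain ⟨a, b, hva, hvb, hab⟩ := mem_triFinset.mp hv
  obtain ⟨⟨ha, hb⟩, hnv, hna, hnb⟩ := tri_mates hK hva hvb hab
  have hsub : ({v, a, b} : Finset (Fin n)) ⊆ triFinset G := by
    intro x hx; simp only [Finset.mem_insert, Finset.mem_singleton] at hx
    rcases hx with rfl | rfl | rfl <;> assumption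
  have hc : ({v, a, b} : Finset (Fin n)).card = 3 := by
    rw [Finset.card_insert_of_notMem (by simp [hva.ne, hvb.ne]),
      Finset.card_insert_of_notMem (by simp [hab.ne]), Finset.card_singleton]
  have hdiff : (triFinset G \ {v, a, b}).Nonempty := by
    rw [← Finset.card_pos, Finset.card_sdiff_of_subset hsub, hc]; omega
  obtain ⟨u, hu⟩ := hdiff
  rw [Finset.mem_sdiff] at hu
  obtain ⟨huT, hunotin⟩ := hu
  simp only [Finset.mem_insert, Finset.mem_singleton, not_or] at hunotin
  obtain ⟨huv, hua, hub⟩ := hunotin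
  obtain ⟨c, d, huc, hud, hcd⟩ := mem_triFinset.mp huT
  obtain ⟨⟨hcT, hdT⟩, _, _, _⟩ := tri_mates hK huc hud hcd
  -- c, d are not in {v, a, b}
  have hfresh : ∀ z, G.Adj u z → z ≠ v ∧ z ≠ a ∧ z ≠ b := by
    intro z hz
    refine ⟨?_, ?_, ?_⟩ <;> rintro rfl
    · rcases hnv u hz.symm with rfl | rfl
      · exact hua rfl
      · exact hub rfl
    · rcases hna u hz.symm with rfl | rfl
      · exact huv rfl
      · exact hub rfl
    · rcases hnb u hz.symm with rfl | rfl
      · exact huv rfl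
      · exact hua rfl
  obtain ⟨hcv, hca, hcb⟩ := hfresh c huc
  obtain ⟨hdv, hda, hdb⟩ := hfresh d hud
  have hsub6 : ({v, a, b, u, c, d} : Finset (Fin n)) ⊆ triFinset G := by
    intro x hx
    simp only [Finset.mem_insert, Finset.mem_singleton] at hx
    rcases hx with rfl | rfl | rfl | rfl | rfl | rfl <;> assumption
  have hc6 : ({v, a, b, u, c, d} : Finset (Fin n)).card = 6 := by
    have h1 := hva.ne; have h2 := hvb.ne; have h3 := hab.ne
    have h4 := huc.ne; have h5 := hud.ne; have h6 := hcd.ne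
    rw [Finset.card_insert_of_notMem (by simp_all [eq_comm]),
      Finset.card_insert_of_notMem (by simp_all [eq_comm]),
      Finset.card_insert_of_notMem (by simp_all [eq_comm]),
      Finset.card_insert_of_notMem (by simp_all [eq_comm]),
      Finset.card_insert_of_notMem (by simp_all [eq_comm]), Finset.card_singleton]
  calc 6 = ({v, a, b, u, c, d} : Finset (Fin n)).card := hc6.symm
    _ ≤ _ := Finset.card_le_card hsub6


def NoTri (G : SimpleGraph (Fin n)) : Prop :=
  ∀ x y z, G.Adj x y → G.Adj y z → G.Adj x z → False

def NoC4 (G : SimpleGraph (Fin n)) : Prop :=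
  ∀ a b c d, a ≠ c → b ≠ d → G.Adj a b → G.Adj b c → G.Adj c d → G.Adj d a → False

lemma construct_small (hK : NoPendant G) (hQ : NoC4 G)
    (hT3 : (triFinset G).card = 3) (hlt : 3 < n) :
    ∃ G' : SimpleGraph (Fin n), NoTri G' ∧ NoC4 G' ∧
      G.edgeSet.ncard ≤ G'.edgeSet.ncard := by
  obtain ⟨v, hv⟩ : (triFinset G).Nonempty := Finset.card_pos.mp (by omega)
  obtain ⟨a, b, hva, hvb, hab⟩ := mem_triFinset.mp hv
  obtain ⟨⟨haT, hbT⟩, hnv, hna, hnb⟩ := tri_mates hK hva hvb hab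
  -- a vertex outside the triangle part
  have hcc : (triFinset G)ᶜ.card = n - 3 := by
    rw [Finset.card_compl, hT3, Fintype.card_fin]
  obtain ⟨w, hw'⟩ : ((triFinset G)ᶜ : Finset (Fin n)).Nonempty := by
    rw [← Finset.card_pos, hcc]; omega
  have hw : w ∉ triFinset G := Finset.mem_compl.mp hw'
  have hwv : w ≠ v := fun h => hw (h ▸ hv)
  have hwa : w ≠ a := fun h => hw (h ▸ haT)
  have hwb : w ≠ b := fun h => hw (h ▸ hbT)
  set E' : Set (Sym2 (Fin n)) := Bset G ∪ {s(v,a), s(a,b), s(b,w)} with hE'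
  set G' : SimpleGraph (Fin n) := SimpleGraph.fromEdgeSet E' with hG'
  have hED : G'.edgeSet = E' := by
    rw [hG', edgeSet_fromEdgeSet]
    apply Set.Subset.antisymm Set.diff_subset
    apply Set.subset_diff.mpr
    refine ⟨subset_rfl, Set.disjoint_left.mpr ?_⟩
    rintro e he hd
    rcases he with ⟨heB, _⟩ | he
    · exact G.not_isDiag_of_mem_edgeSet heB hd
    · simp only [Set.mem_insert_iff, Set.mem_singleton_iff] at he
      rcases he with rfl | rfl | rfl <;>
        rw [Sym2.mem_diagSet, Sym2.mk_isDiag_iff] at hd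
      · exact hva.ne hd
      · exact hab.ne hd
      · exact hwb hd.symm
  have hcases : ∀ {x y}, G'.Adj x y →
      (G.Adj x y ∧ x ∉ triFinset G ∧ y ∉ triFinset G) ∨
      ((x = v ∧ y = a) ∨ (x = a ∧ y = v)) ∨
      ((x = a ∧ y = b) ∨ (x = b ∧ y = a)) ∨
      ((x = b ∧ y = w) ∨ (x = w ∧ y = b)) := by
    intro x y h
    rw [hG', fromEdgeSet_adj] at h
    obtain ⟨hm, hne⟩ := h
    rcases hm with hB | hN
    · exact Or.inl (mem_Bset.mp hB)
    · right
      simp only [Set.mem_insert_iff, Set.mem_singleton_iff, Sym2.eq_iff] at hN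
      tauto
  have nbv : ∀ z, G'.Adj v z → z = a := by
    intro z h
    rcases hcases h with ⟨_, hx, _⟩ | (⟨_, rfl⟩ | ⟨h1, _⟩) | (⟨h1, _⟩ | ⟨h1, _⟩) | (⟨h1, _⟩ | ⟨h1, _⟩)
    · exact absurd hv hx
    · rfl
    · exact absurd h1 hva.ne
    · exact absurd h1 hva.ne
    · exact absurd h1 hvb.ne
    · exact absurd h1 hvb.ne
    · exact absurd h1.symm hwv
  have nba : ∀ z, G'.Adj a z → z = v ∨ z = b := by
    intro z h
    rcases hcases h with ⟨_, hx, _⟩ | (⟨h1, _⟩ | ⟨_, rfl⟩) | (⟨_, rfl⟩ | ⟨h1, _⟩) | (⟨h1, _⟩ | ⟨h1, _⟩)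
    · exact absurd haT hx
    · exact absurd h1.symm hva.ne
    · exact Or.inl rfl
    · exact Or.inr rfl
    · exact absurd h1 hab.ne
    · exact absurd h1 hab.ne
    · exact absurd h1.symm hwa
  have nbb : ∀ z, G'.Adj b z → z = a ∨ z = w := by
    intro z h
    rcases hcases h with ⟨_, hx, _⟩ | (⟨h1, _⟩ | ⟨h1, _⟩) | (⟨h1, _⟩ | ⟨_, rfl⟩) | (⟨_, rfl⟩ | ⟨h1, _⟩)
    · exact absurd hbT hx
    · exact absurd h1.symm hvb.ne
    · exact absurd h1.symm hab.ne
    · exact absurd h1.symm hab.ne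
    · exact Or.inl rfl
    · exact Or.inr rfl
    · exact absurd h1.symm hwb
  have outside : ∀ {x y}, G'.Adj x y → x ≠ v → x ≠ a → x ≠ b → y ≠ v → y ≠ a → y ≠ b →
      G.Adj x y ∧ x ∉ triFinset G ∧ y ∉ triFinset G := by
    intro x y h hx1 hx2 hx3 hy1 hy2 hy3
    rcases hcases h with hh | (⟨h1, h2⟩ | ⟨h1, h2⟩) | (⟨h1, h2⟩ | ⟨h1, h2⟩) | (⟨h1, h2⟩ | ⟨h1, h2⟩)
    · exact hh
    · exact absurd h1 hx1
    · exact absurd h1 hx2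
    · exact absurd h1 hx2
    · exact absurd h1 hx3
    · exact absurd h1 hx3
    · exact absurd h2 hy3
  have keyv : ∀ p q r, G'.Adj p q → G'.Adj p r → q ≠ r → p ≠ v := by
    rintro p q r h1 h2 hqr rfl
    have e1 := nbv _ h1; have e2 := nbv _ h2
    exact hqr (e1.trans e2.symm)
  have keya : ∀ p q r, G'.Adj p q → G'.Adj p r → q ≠ r → q ≠ v → r ≠ v → p ≠ a := by
    rintro p q r h1 h2 hqr hq hr rfl
    rcases nba _ h1 with rfl | rfl
    · exact hq rfl
    · rcases nba _ h2 with rfl | rfl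
      · exact hr rfl
      · exact hqr rfl
  have keyb : ∀ p q r, G'.Adj p q → G'.Adj p r → q ≠ r → q ≠ a → r ≠ a → p ≠ b := by
    rintro p q r h1 h2 hqr hq hr rfl
    rcases nbb _ h1 with rfl | rfl
    · exact hq rfl
    · rcases nbb _ h2 with rfl | rfl
      · exact hr rfl
      · exact hqr rfl
  have hNoTri : NoTri G' := by
    intro x y z h1 h2 h3
    -- h1 : x ~ y, h2 : y ~ z, h3 : x ~ z
    have hyz : y ≠ z := h2.ne
    have hxy : x ≠ y := h1.ne
    have hxz : x ≠ z := h3.ne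
    have hxv : x ≠ v := keyv x y z h1 h3 hyz
    have hyv : y ≠ v := keyv y x z h1.symm h2 hxz
    have hzv : z ≠ v := keyv z x y h3.symm h2.symm hxy
    have hxa : x ≠ a := keya x y z h1 h3 hyz hyv hzv
    have hya : y ≠ a := keya y x z h1.symm h2 hxz hxv hzv
    have hza : z ≠ a := keya z x y h3.symm h2.symm hxy hxv hyv
    have hxb : x ≠ b := keyb x y z h1 h3 hyz hya hza
    have hyb : y ≠ b := keyb y x z h1.symm h2 hxz hxa hza
    have hzb : z ≠ b := keyb z x y h3.symm h2.symm hxy hxa hya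
    obtain ⟨g1, hxT, hyT⟩ := outside h1 hxv hxa hxb hyv hya hyb
    obtain ⟨g2, _, hzT⟩ := outside h2 hyv hya hyb hzv hza hzb
    obtain ⟨g3, _, _⟩ := outside h3 hxv hxa hxb hzv hza hzb
    exact hxT (mem_triFinset.mpr ⟨y, z, g1, g3, g2⟩)
  have hNoC4 : NoC4 G' := by
    intro x0 x1 x2 x3 h02 h13 h1 h2 h3 h4
    have hv0 : x0 ≠ v := keyv x0 x1 x3 h1 h4.symm h13
    have hv1 : x1 ≠ v := keyv x1 x2 x0 h2 h1.symm h02.symm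
    have hv2 : x2 ≠ v := keyv x2 x3 x1 h3 h2.symm h13.symm
    have hv3 : x3 ≠ v := keyv x3 x0 x2 h4 h3.symm h02
    have ha0 : x0 ≠ a := keya x0 x1 x3 h1 h4.symm h13 hv1 hv3
    have ha1 : x1 ≠ a := keya x1 x2 x0 h2 h1.symm h02.symm hv2 hv0
    have ha2 : x2 ≠ a := keya x2 x3 x1 h3 h2.symm h13.symm hv3 hv1
    have ha3 : x3 ≠ a := keya x3 x0 x2 h4 h3.symm h02 hv0 hv2
    have hb0 : x0 ≠ b := keyb x0 x1 x3 h1 h4.symm h13 ha1 ha3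
    have hb1 : x1 ≠ b := keyb x1 x2 x0 h2 h1.symm h02.symm ha2 ha0
    have hb2 : x2 ≠ b := keyb x2 x3 x1 h3 h2.symm h13.symm ha3 ha1
    have hb3 : x3 ≠ b := keyb x3 x0 x2 h4 h3.symm h02 ha0 ha2
    obtain ⟨g1, _, _⟩ := outside h1 hv0 ha0 hb0 hv1 ha1 hb1
    obtain ⟨g2, _, _⟩ := outside h2 hv1 ha1 hb1 hv2 ha2 hb2
    obtain ⟨g3, _, _⟩ := outside h3 hv2 ha2 hb2 hv3 ha3 hb3
    obtain ⟨g4, _, _⟩ := outside h4 hv3 ha3 hb3 hv0 ha0 hb0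
    exact hQ x0 x1 x2 x3 h02 h13 g1 g2 g3 g4
  -- edge count
  have hN3 : ({s(v,a), s(a,b), s(b,w)} : Set (Sym2 (Fin n))).ncard = 3 := by
    rw [Set.ncard_insert_of_notMem ?_ (Set.toFinite _),
      Set.ncard_insert_of_notMem ?_ (Set.toFinite _), Set.ncard_singleton]
    · have k1 : v ≠ a := hva.ne
      have k2 : v ≠ b := hvb.ne
      have k3 : a ≠ b := hab.ne
      have k4 : a ≠ w := fun h => hwa h.symm
      have k5 : b ≠ w := fun h => hwb h.symm
      have k6 : v ≠ w := fun h => hwv h.symm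
      simp only [Set.mem_singleton_iff, Sym2.eq_iff]
      tauto
    · have k1 : v ≠ a := hva.ne
      have k2 : v ≠ b := hvb.ne
      have k3 : a ≠ b := hab.ne
      have k4 : a ≠ w := fun h => hwa h.symm
      have k5 : b ≠ w := fun h => hwb h.symm
      have k6 : v ≠ w := fun h => hwv h.symm
      simp only [Set.mem_insert_iff, Set.mem_singleton_iff, Sym2.eq_iff]
      tauto
  have hdisj : Disjoint (Bset G) ({s(v,a), s(a,b), s(b,w)} : Set (Sym2 (Fin n))) := by
    rw [Set.disjoint_left]
    rintro e ⟨heB, hall⟩ heN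
    simp only [Set.mem_insert_iff, Set.mem_singleton_iff] at heN
    rcases heN with rfl | rfl | rfl
    · exact hall v (Sym2.mem_mk_left _ _) hv
    · exact hall a (Sym2.mem_mk_left _ _) haT
    · exact hall b (Sym2.mem_mk_left _ _) hbT
  have hG'card : G'.edgeSet.ncard = (Bset G).ncard + 3 := by
    rw [hED, hE', Set.ncard_union_eq hdisj (Set.toFinite _) (Set.toFinite _), hN3]
  have hGcard : G.edgeSet.ncard = (Aset G).ncard + (Bset G).ncard := by
    rw [edge_split hK, Set.ncard_union_eq AB_disjoint (Set.toFinite _) (Set.toFinite _)]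
  have hAle : (Aset G).ncard ≤ 3 := hT3 ▸ Acard hK
  exact ⟨G', hNoTri, hNoC4, by omega⟩


lemma construct_big (hK : NoPendant G) (hQ : NoC4 G)
    (hT6 : 6 ≤ (triFinset G).card) :
    ∃ G' : SimpleGraph (Fin n), NoTri G' ∧ NoC4 G' ∧
      G.edgeSet.ncard ≤ G'.edgeSet.ncard := by
  set T := triFinset G with hT
  set m := T.card with hm'
  haveI : NeZero m := ⟨by omega⟩
  have hm : 6 ≤ m := hT6
  set f : Fin m → Fin n := fun i => ((T.orderIsoOfFin rfl) i : Fin n) with hf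
  have hfinj : Function.Injective f := fun i j h =>
    (T.orderIsoOfFin rfl).injective (Subtype.ext h)
  have hfT : ∀ i, f i ∈ T := fun i => ((T.orderIsoOfFin rfl) i).2
  set g : Fin m → Sym2 (Fin n) := fun i => s(f i, f (i + 1)) with hg
  have hgne : ∀ i, f i ≠ f (i + 1) := fun i h => succ_ne hm i (hfinj h)
  have hginj : Function.Injective g := by
    intro i j h
    rw [hg, Sym2.eq_iff] at h
    rcases h with ⟨h1, _⟩ | ⟨h1, h2⟩
    · exact hfinj h1
    · exact (succ_inj hm i j (hfinj h1) ((hfinj h2).symm)).elim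
  set N : Set (Sym2 (Fin n)) := Set.range g with hN
  have hNcard : N.ncard = m := by
    rw [hN, ← Set.image_univ, Set.ncard_image_of_injective _ hginj, Set.ncard_univ]
    simp
  have hdisj : Disjoint (Bset G) N := by
    rw [Set.disjoint_left]
    rintro e ⟨heB, hall⟩ ⟨i, rfl⟩
    exact hall (f i) (Sym2.mem_mk_left _ _) (hfT i)
  set G' : SimpleGraph (Fin n) := SimpleGraph.fromEdgeSet (Bset G ∪ N) with hG'
  have hED : G'.edgeSet = Bset G ∪ N := by
    rw [hG', edgeSet_fromEdgeSet]
    apply Set.Subset.antisymm Set.diff_subset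
    apply Set.subset_diff.mpr
    refine ⟨subset_rfl, Set.disjoint_left.mpr ?_⟩
    rintro e he hd
    rcases he with ⟨heB, _⟩ | ⟨i, rfl⟩
    · exact G.not_isDiag_of_mem_edgeSet heB hd
    · rw [Sym2.mem_diagSet] at hd
      rw [hg, Sym2.mk_isDiag_iff] at hd
      exact hgne i hd
  have hcases : ∀ {x y}, G'.Adj x y →
      (G.Adj x y ∧ x ∉ T ∧ y ∉ T) ∨
      (∃ i j : Fin m, x = f i ∧ y = f j ∧ (j = i + 1 ∨ i = j + 1)) := by
    intro x y h
    rw [hG', fromEdgeSet_adj] at h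
    obtain ⟨hmem, hne⟩ := h
    rcases hmem with hB | ⟨i, hi⟩
    · exact Or.inl (mem_Bset.mp hB)
    · right
      rw [hg] at hi
      rw [Sym2.eq_iff] at hi
      rcases hi with ⟨h1, h2⟩ | ⟨h1, h2⟩
      · exact ⟨i, i + 1, h1.symm, h2.symm, Or.inl rfl⟩
      · exact ⟨i + 1, i, h2.symm, h1.symm, Or.inr rfl⟩
  have hNoTri : NoTri G' := by
    intro x y z h1 h2 h3
    rcases hcases h1 with ⟨g1, hxT, hyT⟩ | ⟨i, j, rfl, rfl, hR1⟩
    · rcases hcases h2 with ⟨g2, _, hzT⟩ | ⟨i, j, hy, _, _⟩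
      · rcases hcases h3 with ⟨g3, _, _⟩ | ⟨i, j, hx, _, _⟩
        · exact hxT (mem_triFinset.mpr ⟨y, z, g1, g3, g2⟩)
        · exact hxT (hx ▸ hfT i)
      · exact hyT (hy ▸ hfT i)
    · rcases hcases h2 with ⟨_, hyT, _⟩ | ⟨j', k, hy, hz, hR2⟩
      · exact hyT (hfT j)
      · rcases hcases h3 with ⟨_, hxT, _⟩ | ⟨i', k', hx, hz', hR3⟩
        · exact hxT (hfT i)
        · have hjj : j' = j := hfinj hy.symm
          have hii : i' = i := hfinj hx.symm
          have hkk : k' = k := hfinj (hz'.symm.trans hz)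
          rw [hjj] at hR2
          rw [hii, hkk] at hR3
          exact tri_false hm i j k hR1 hR2 hR3
  have hNoC4 : NoC4 G' := by
    intro x0 x1 x2 x3 h02 h13 e1 e2 e3 e4
    rcases hcases e1 with ⟨g1, hx0T, hx1T⟩ | ⟨p, q, rfl, rfl, hR1⟩
    · rcases hcases e2 with ⟨g2, _, hx2T⟩ | ⟨i, j, hy, _, _⟩
      · rcases hcases e3 with ⟨g3, _, hx3T⟩ | ⟨i, j, hy, _, _⟩
        · rcases hcases e4 with ⟨g4, _, _⟩ | ⟨i, j, hy, _, _⟩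
          · exact hQ x0 x1 x2 x3 h02 h13 g1 g2 g3 g4
          · exact hx3T (hy ▸ hfT i)
        · exact hx2T (hy ▸ hfT i)
      · exact hx1T (hy ▸ hfT i)
    · rcases hcases e2 with ⟨_, hx1T, _⟩ | ⟨q', r, hy, hz, hR2⟩
      · exact hx1T (hfT q)
      · rcases hcases e3 with ⟨_, hx2T, _⟩ | ⟨r', s, hy', hz', hR3⟩
        · exact hx2T (hz ▸ hfT r)
        · rcases hcases e4 with ⟨_, hx3T, _⟩ | ⟨s', p', hy'', hz'', hR4⟩
          · exact hx3T (hz' ▸ hfT s)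
          · have hqq : q' = q := hfinj hy.symm
            have hrr : r' = r := hfinj (hy'.symm.trans hz)
            have hss : s' = s := hfinj (hy''.symm.trans hz')
            have hpp : p' = p := hfinj hz''.symm
            rw [hqq] at hR2
            rw [hrr] at hR3
            rw [hss, hpp] at hR4
            have hpr : p ≠ r := fun h => h02 (by rw [h]; exact hz.symm)
            have hqs : q ≠ s := fun h => h13 (by rw [h]; exact hz'.symm)
            exact quad_false hm p q r s hpr hqs hR1 hR2 hR3 hR4
  have hG'card : G'.edgeSet.ncard = (Bset G).ncard + m := by
    rw [hED, Set.ncard_union_eq hdisj (Set.toFinite _) (Set.toFinite _), hNcard]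
  have hGcard : G.edgeSet.ncard = (Aset G).ncard + (Bset G).ncard := by
    rw [edge_split hK, Set.ncard_union_eq AB_disjoint (Set.toFinite _) (Set.toFinite _)]
  have hAle : (Aset G).ncard ≤ m := Acard hK
  exact ⟨G', hNoTri, hNoC4, by omega⟩

lemma construct (h4 : 4 ≤ n) (hK : NoPendant G) (hQ : NoC4 G) :
    ∃ G' : SimpleGraph (Fin n), NoTri G' ∧ NoC4 G' ∧
      G.edgeSet.ncard ≤ G'.edgeSet.ncard := by
  rcases Finset.eq_empty_or_nonempty (triFinset G) with hTe | hne
  · refine ⟨G, ?_, hQ, le_rfl⟩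
    intro x y z h1 h2 h3
    have hx : x ∈ triFinset G := mem_triFinset.mpr ⟨y, z, h1, h3, h2⟩
    rw [hTe] at hx
    exact absurd hx (Finset.notMem_empty x)
  · have h3 := card_tri_of_nonempty hK hne
    rcases Nat.lt_or_ge (triFinset G).card 4 with hlt | hge
    · exact construct_small hK hQ (by omega) (by omega)
    · exact construct_big hK hQ (card_tri_ge_six hK hge)

end Tri


/-- For 4 ≤ n ≤ 10, ext(n,{K_{1,3}+e, C₄}) = ext(n,{C₃, C₄}). -/
theorem extNum_K13e_C4_eq_extNum_C3_C4 (n : ℕ) (h4 : 4 ≤ n) (h10 : n ≤ 10) :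
    extNum2 n K13e (SimpleGraph.cycleGraph 4) =
      extNum2 n (SimpleGraph.cycleGraph 3) (SimpleGraph.cycleGraph 4) := by
  set S1 : Set ℕ := {m | ∃ G : SimpleGraph (Fin n),
    G.edgeSet.ncard = m ∧ ¬ ContainsCopy G K13e ∧
      ¬ ContainsCopy G (SimpleGraph.cycleGraph 4)} with hS1
  set S2 : Set ℕ := {m | ∃ G : SimpleGraph (Fin n),
    G.edgeSet.ncard = m ∧ ¬ ContainsCopy G (SimpleGraph.cycleGraph 3) ∧
      ¬ ContainsCopy G (SimpleGraph.cycleGraph 4)} with hS2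
  have hbd : ∀ (S : Set ℕ),
      (S = S1 ∨ S = S2) → BddAbove S := by
    rintro S (rfl | rfl) <;>
    · refine ⟨Nat.card (Sym2 (Fin n)), ?_⟩
      rintro m ⟨G, hG, -, -⟩
      calc m = G.edgeSet.ncard := hG.symm
        _ ≤ (Set.univ : Set (Sym2 (Fin n))).ncard :=
            Set.ncard_le_ncard (Set.subset_univ _) (Set.toFinite _)
        _ = Nat.card (Sym2 (Fin n)) := Set.ncard_univ _
  have hbot3 : ¬ ContainsCopy (⊥ : SimpleGraph (Fin n)) (SimpleGraph.cycleGraph 3) := by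
    rw [containsC3_iff]
    rintro ⟨a, b, c, h, -, -⟩
    exact h
  have hbot4 : ¬ ContainsCopy (⊥ : SimpleGraph (Fin n)) (SimpleGraph.cycleGraph 4) := by
    rw [containsC4_iff]
    rintro ⟨a, b, c, d, -, -, h, -⟩
    exact h
  have h0 : (0 : ℕ) ∈ S2 :=
    ⟨⊥, by rw [edgeSet_bot]; exact Set.ncard_empty _, hbot3, hbot4⟩
  have hsub : S2 ⊆ S1 := by
    rintro m ⟨G, hG, hc3, hc4⟩
    refine ⟨G, hG, ?_, hc4⟩
    intro hk
    obtain ⟨a, b, c, d, hab, hac, hbc, -, -, -⟩ := (containsK13e_iff G).mp hk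
    exact hc3 ((containsC3_iff G).mpr ⟨a, b, c, hab, hbc, hac⟩)
  rw [extNum2, extNum2, ← hS1, ← hS2]
  apply le_antisymm
  · apply csSup_le ⟨0, hsub h0⟩
    rintro m ⟨G, rfl, hk, hc4⟩
    have hK : NoPendant G := by
      intro a b c d hab hac hbc had
      by_contra h
      push_neg at h
      exact hk ((containsK13e_iff G).mpr ⟨a, b, c, d, hab, hac, hbc, had, h.1, h.2⟩)
    have hQ : NoC4 G := by
      intro a b c d h1 h2 h3 h4 h5 h6
      exact hc4 ((containsC4_iff G).mpr ⟨a, b, c, d, h1, h2, h3, h4, h5, h6⟩)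
    obtain ⟨G', hT', hQ', hle⟩ := construct h4 hK hQ
    have hmem : G'.edgeSet.ncard ∈ S2 := by
      refine ⟨G', rfl, ?_, ?_⟩
      · intro hc
        obtain ⟨a, b, c, h1, h2, h3⟩ := (containsC3_iff G').mp hc
        exact hT' a b c h1 h2 h3
      · intro hc
        obtain ⟨a, b, c, d, h1, h2, h3, h4, h5, h6⟩ := (containsC4_iff G').mp hc
        exact hQ' a b c d h1 h2 h3 h4 h5 h6
    exact hle.trans (le_csSup (hbd S2 (Or.inr rfl)) hmem)
  · exact csSup_le_csSup (hbd S1 (Or.inl rfl)) ⟨0, h0⟩ hsub
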